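/- Consider the scalar simplicial SIS model ẏ = -γy + β₁(1-y)y + β₂(1-y)y², with γ, β₁, β₂ > 0. If β₂/γ > 1 and 2√(β₂/γ) - β₂/γ < β₁/γ < 1, then the quadratic equation -γ + β₁(1-y) + β₂(1-y)y = 0 has two distinct real roots ν₋ < ν₊ both lying in the interval (0,1]. -/

import Mathlib

/-- In the bistable domain of the scalar simplicial SIS model, the quadratic
`-γ + β₁(1-y) + β₂(1-y)y = 0` has two distinct roots `ν₋ < ν₊`, both in `(0,1]`. -/
theorem scalar_bistable_two_roots (γ β₁ β₂ : ℝ) (hγ : 0 < γ) (hβ₁ : 0 < β₁) (hβ₂ : 0 < β₂)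
    (h1 : 1 < β₂ / γ) (h2 : 2 * Real.sqrt (β₂ / γ) - β₂ / γ < β₁ / γ) (h3 : β₁ / γ < 1) :
    let νm := (1 / 2) * (1 - β₁ / β₂) -
      (1 / (2 * β₂)) * Real.sqrt ((β₁ - β₂) ^ 2 - 4 * β₂ * (γ - β₁))
    let νp := (1 / 2) * (1 - β₁ / β₂) +
      (1 / (2 * β₂)) * Real.sqrt ((β₁ - β₂) ^ 2 - 4 * β₂ * (γ - β₁))
    νm < νp ∧ νm ∈ Set.Ioc (0 : ℝ) 1 ∧ νp ∈ Set.Ioc (0 : ℝ) 1 ∧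
      (-γ + β₁ * (1 - νm) + β₂ * (1 - νm) * νm = 0) ∧
      (-γ + β₁ * (1 - νp) + β₂ * (1 - νp) * νp = 0) := by
  intro νm νp
  have hγβ₂ : γ < β₂ := by
    have := (one_lt_div hγ).mp h1; linarith
  have hβ₁γ : β₁ < γ := (div_lt_one hγ).mp h3
  set D : ℝ := (β₁ - β₂) ^ 2 - 4 * β₂ * (γ - β₁) with hDdef
  have ht : Real.sqrt (β₂ / γ) ^ 2 = β₂ / γ := Real.sq_sqrt (by positivity)
  have htpos : 0 < Real.sqrt (β₂ / γ) := Real.sqrt_pos.mpr (by positivity)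
  have hsum : β₁ + β₂ > 2 * γ * Real.sqrt (β₂ / γ) := by
    have h2' : (2 * Real.sqrt (β₂ / γ) - β₂ / γ) * γ < (β₁ / γ) * γ := by
      apply mul_lt_mul_of_pos_right h2 hγ
    rw [div_mul_cancel₀ _ hγ.ne'] at h2'
    have : (β₂ / γ) * γ = β₂ := div_mul_cancel₀ _ hγ.ne'
    nlinarith
  have hsq : (2 * γ * Real.sqrt (β₂ / γ)) ^ 2 = 4 * γ * β₂ := by
    rw [mul_pow, mul_pow, ht]; field_simp; ring
  have hD : 0 < D := by
    have h4 : (β₁ + β₂) ^ 2 > 4 * γ * β₂ := by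
      rw [← hsq]
      have hnn : 0 ≤ 2 * γ * Real.sqrt (β₂ / γ) := by positivity
      nlinarith
    nlinarith
  set s : ℝ := Real.sqrt D with hsdef
  have hs2 : s ^ 2 = D := Real.sq_sqrt hD.le
  have hspos : 0 < s := Real.sqrt_pos.mpr hD
  have hslt1 : s < β₂ - β₁ := by
    have hba : 0 < β₂ - β₁ := by linarith
    nlinarith [hs2, hspos]
  have hslt2 : s < β₁ + β₂ := by
    nlinarith [hs2, hspos, mul_pos hβ₂ hγ]
  have hνm : νm = (β₂ - β₁ - s) / (2 * β₂) := by
    show (1 / 2) * (1 - β₁ / β₂) - (1 / (2 * β₂)) * s = _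
    field_simp
  have hνp : νp = (β₂ - β₁ + s) / (2 * β₂) := by
    show (1 / 2) * (1 - β₁ / β₂) + (1 / (2 * β₂)) * s = _
    field_simp
  rw [hDdef] at hs2
  clear_value s
  clear hsdef hDdef hD hsq hsum ht htpos
  have h2β₂ : 0 < 2 * β₂ := by linarith
  refine ⟨?_, ⟨?_, ?_⟩, ⟨?_, ?_⟩, ?_, ?_⟩
  · rw [hνm, hνp]
    exact div_lt_div_of_pos_right (by linarith) h2β₂
  · rw [hνm]; exact div_pos (by linarith) h2β₂
  · rw [hνm, div_le_one h2β₂]; linarith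
  · rw [hνp]; exact div_pos (by linarith) h2β₂
  · rw [hνp, div_le_one h2β₂]; linarith
  · rw [hνm]; field_simp; linear_combination (-1) * hs2
  · rw [hνp]; field_simp; linear_combination (-1) * hs2
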